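/- Let X be a finite set, let τ be a fixed-point-free involutive permutation of X, let A ⊆ X satisfy τ(A) = A, and let σ be any permutation of X. Then the subgroup of the permutation group of X generated by π_A ∘ σ and τ has exactly the same orbits on X as the subgroup generated by σ and τ. In particular, partial duality relative to any set of edges preserves the number of connected components of a ribbon graph. (Lemma 2.3(f) expressed via rotation systems.) -/
import Mathlib

/-- The partial-duality permutation `π_A` of a rotation system: it agrees with the
edge involution `τ` on the τ-invariant set `A` of half-edges and is the identity
off `A`. -/
def piPerm {X : Type*} [DecidableEq X] (τ : Equiv.Perm X) (A : Finset X)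
    (hτ : ∀ x, τ (τ x) = x) (hA : A.image τ = A) : Equiv.Perm X where
  toFun x := if x ∈ A then τ x else x
  invFun x := if x ∈ A then τ x else x
  left_inv x := by
    by_cases hx : x ∈ A
    · have hτx : τ x ∈ A := by rw [← hA]; exact Finset.mem_image_of_mem τ hx
      simp [hx, hτx, hτ]
    · simp [hx]
  right_inv x := by
    by_cases hx : x ∈ A
    · have hτx : τ x ∈ A := by rw [← hA]; exact Finset.mem_image_of_mem τ hx
      simp [hx, hτx, hτ]
    · simp [hx]

lemma piPerm_apply {X : Type*} [DecidableEq X] (τ : Equiv.Perm X) (A : Finset X)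
    (hτ : ∀ x, τ (τ x) = x) (hA : A.image τ = A) (x : X) :
    piPerm τ A hτ hA x = if x ∈ A then τ x else x := rfl

lemma piPerm_invol {X : Type*} [DecidableEq X] (τ : Equiv.Perm X) (A : Finset X)
    (hτ : ∀ x, τ (τ x) = x) (hA : A.image τ = A) (x : X) :
    piPerm τ A hτ hA (piPerm τ A hτ hA x) = x := by
  by_cases hx : x ∈ A
  · have hτx : τ x ∈ A := by rw [← hA]; exact Finset.mem_image_of_mem τ hx
    simp [piPerm_apply, hx, hτx, hτ]
  · simp [piPerm_apply, hx]

lemma orbit_gen {X : Type*} (S T : Set (Equiv.Perm X))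
    (h : ∀ s ∈ S, ∀ x, s x ∈ MulAction.orbit (Subgroup.closure T) x) :
    ∀ g ∈ Subgroup.closure S, ∀ x : X,
      g x ∈ MulAction.orbit (Subgroup.closure T) x := by
  intro g hg
  induction hg using Subgroup.closure_induction with
  | mem s hs => exact h s hs
  | one => intro x; simp only [Equiv.Perm.one_apply]; exact MulAction.mem_orbit_self x
  | mul a b ha hb hia hib =>
      intro x
      have h1 := hib x
      have h2 := hia (b x)
      rw [(MulAction.orbit_eq_iff.mpr h1)] at h2
      simpa using h2
  | inv a ha hia =>
      intro x
      have h1 := hia (a⁻¹ x)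
      have : a (a⁻¹ x) = x := by simp
      rw [this] at h1
      rw [MulAction.orbit_eq_iff.mpr h1]
      exact MulAction.mem_orbit_self _

/-- **Lemma 2.3(f) via rotation systems.**  Let `τ` be a fixed-point-free involution on
the finite set `X` of half-edges and let `A ⊆ X` be τ-invariant.  For every rotation
`σ`, the subgroup generated by `π_A ∘ σ` and `τ` has exactly the same orbits on `X`
as the subgroup generated by `σ` and `τ`; in particular partial duality relative to
any set of edges preserves the number of connected components of a ribbon graph. -/
theorem partial_dual_orbits {X : Type*} [Fintype X] [DecidableEq X]
    (τ : Equiv.Perm X) (hτ : ∀ x, τ (τ x) = x) (hfp : ∀ x, τ x ≠ x)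
    (A : Finset X) (hA : A.image τ = A) (σ : Equiv.Perm X) :
    ∀ x : X,
      MulAction.orbit (Subgroup.closure {piPerm τ A hτ hA * σ, τ} : Subgroup (Equiv.Perm X)) x =
        MulAction.orbit (Subgroup.closure {σ, τ} : Subgroup (Equiv.Perm X)) x := by
  set π := piPerm τ A hτ hA with hπ
  set S : Set (Equiv.Perm X) := {π * σ, τ} with hS
  set T : Set (Equiv.Perm X) := {σ, τ} with hT
  -- generators of closure S move points within T-orbits
  have hST : ∀ s ∈ S, ∀ x, s x ∈ MulAction.orbit (Subgroup.closure T) x := by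
    intro s hs x
    simp only [hS, Set.mem_insert_iff, Set.mem_singleton_iff] at hs
    rcases hs with h | h <;> rw [h]
    · by_cases hx : σ x ∈ A
      · refine ⟨⟨τ * σ, ?_⟩, ?_⟩
        · exact mul_mem (Subgroup.subset_closure (by simp [hT]))
            (Subgroup.subset_closure (by simp [hT]))
        · show (τ * σ) x = (π * σ) x
          simp [hπ, piPerm_apply, hx, Equiv.Perm.mul_apply]
      · refine ⟨⟨σ, Subgroup.subset_closure (by simp [hT])⟩, ?_⟩
        show σ x = (π * σ) x
        simp [hπ, piPerm_apply, hx, Equiv.Perm.mul_apply]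
    · exact ⟨⟨τ, Subgroup.subset_closure (by simp [hT])⟩, rfl⟩
  have hTS : ∀ s ∈ T, ∀ x, s x ∈ MulAction.orbit (Subgroup.closure S) x := by
    intro s hs x
    simp only [hT, Set.mem_insert_iff, Set.mem_singleton_iff] at hs
    rcases hs with h | h <;> rw [h]
    · by_cases hx : (π * σ) x ∈ A
      · refine ⟨⟨τ * (π * σ), ?_⟩, ?_⟩
        · exact mul_mem (Subgroup.subset_closure (by simp [hS]))
            (Subgroup.subset_closure (by simp [hS]))
        · show (τ * (π * σ)) x = σ x
          have h2 : σ x = π ((π * σ) x) := (piPerm_invol τ A hτ hA (σ x)).symm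
          rw [h2]
          show τ ((π * σ) x) = if (π * σ) x ∈ A then τ ((π * σ) x) else (π * σ) x
          rw [if_pos hx]
      · refine ⟨⟨π * σ, Subgroup.subset_closure (by simp [hS])⟩, ?_⟩
        show (π * σ) x = σ x
        have h2 : σ x = π ((π * σ) x) := (piPerm_invol τ A hτ hA (σ x)).symm
        rw [h2]
        show (π * σ) x = if (π * σ) x ∈ A then τ ((π * σ) x) else (π * σ) x
        rw [if_neg hx]
    · exact ⟨⟨τ, Subgroup.subset_closure (by simp [hS])⟩, rfl⟩
  intro x
  apply le_antisymm
  · rintro y ⟨⟨g, hg⟩, rfl⟩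
    exact orbit_gen S T hST g hg x
  · rintro y ⟨⟨g, hg⟩, rfl⟩
    exact orbit_gen T S hTS g hg x
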